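/- For every odd integer m > 1, sum_{n=0}^{m-1} [4n-1] (q^{-1};q^2)_n^4 / (q^2;q^2)_n^4 · q^{4n} = -((1+q)[2m-2][2m-1] + q^{2m-2}) / (q (-q;q)_{m-1}^8) · (qbinom(2m-2, m-1))^4 in ℚ(q). -/

import Mathlib

open RatFunc

noncomputable def q : RatFunc ℚ := RatFunc.X

/-- q-shifted factorial `(a;b)_m = ∏_{j=0}^{m-1} (1 - a b^j)`. -/
noncomputable def qpoch (a b : RatFunc ℚ) (m : ℕ) : RatFunc ℚ :=
  ∏ j ∈ Finset.range m, (1 - a * b ^ j)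

/-- q-integer `[m] = (1-q^m)/(1-q)` for an arbitrary integer `m`. -/
noncomputable def qintZ (m : ℤ) : RatFunc ℚ := (1 - q ^ m) / (1 - q)

/-- q-integer `[m] = 1 + q + ⋯ + q^{m-1}`. -/
noncomputable def qint (m : ℕ) : RatFunc ℚ := ∑ i ∈ Finset.range m, q ^ i

/-- q-binomial coefficient `(q;q)_n / ((q;q)_k (q;q)_{n-k})`. -/
noncomputable def qbinom (n k : ℕ) : RatFunc ℚ :=
  qpoch q q n / (qpoch q q k * qpoch q q (n - k))

lemma hq0 : q ≠ 0 := RatFunc.X_ne_zero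

lemma pow_sub_ne (n : ℕ) (hn : n ≠ 0) : (1 : RatFunc ℚ) - q ^ n ≠ 0 := by
  have h : (1 - Polynomial.X ^ n : Polynomial ℚ) ≠ 0 := by
    intro h
    have := congrArg (Polynomial.eval 0) h
    simp [Polynomial.eval_pow, zero_pow hn] at this
  have := RatFunc.algebraMap_ne_zero h
  simpa [q, RatFunc.algebraMap_X] using this

lemma pow_add_ne (n : ℕ) : (1 : RatFunc ℚ) + q ^ n ≠ 0 := by
  have h : (1 + Polynomial.X ^ n : Polynomial ℚ) ≠ 0 := by
    intro h
    have := congrArg (fun p => Polynomial.coeff p 0) h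
    rcases Nat.eq_zero_or_pos n with h0 | h0
    · subst h0; simp at this
    · have hne : n ≠ 0 := by omega
      simp [Polynomial.coeff_X_pow, Ne.symm hne] at this
  have := RatFunc.algebraMap_ne_zero h
  simpa [q, RatFunc.algebraMap_X] using this

lemma h1q : (1 : RatFunc ℚ) - q ≠ 0 := by simpa using pow_sub_ne 1 one_ne_zero

lemma qpoch_zero (a b : RatFunc ℚ) : qpoch a b 0 = 1 := Finset.prod_range_zero _

lemma qpoch_succ (a b : RatFunc ℚ) (n : ℕ) :
    qpoch a b (n+1) = qpoch a b n * (1 - a * b ^ n) := Finset.prod_range_succ _ _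

lemma E_ne (n : ℕ) : qpoch q q n ≠ 0 := by
  unfold qpoch
  rw [Finset.prod_ne_zero_iff]
  intro j _
  have h := pow_sub_ne (j+1) (by omega)
  intro hc; exact h (by linear_combination hc)

lemma B_ne (n : ℕ) : qpoch (q^2) (q^2) n ≠ 0 := by
  unfold qpoch
  rw [Finset.prod_ne_zero_iff]
  intro j _
  have h := pow_sub_ne (2*j+2) (by omega)
  intro hc; exact h (by linear_combination hc)

lemma D_ne (n : ℕ) : qpoch (-q) q n ≠ 0 := by
  unfold qpoch
  rw [Finset.prod_ne_zero_iff]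
  intro j _
  have h := pow_add_ne (j+1)
  intro hc; exact h (by linear_combination hc)

lemma O_ne (n : ℕ) : qpoch q (q^2) n ≠ 0 := by
  unfold qpoch
  rw [Finset.prod_ne_zero_iff]
  intro j _
  have h := pow_sub_ne (2*j+1) (by omega)
  intro hc; exact h (by linear_combination hc)

lemma relB (n : ℕ) : qpoch (q^2) (q^2) n = qpoch q q n * qpoch (-q) q n := by
  induction n with
  | zero => simp [qpoch_zero]
  | succ k ih => rw [qpoch_succ, qpoch_succ, qpoch_succ, ih]; ring

lemma relE2 (n : ℕ) : qpoch q q (2*n) = qpoch q (q^2) n * qpoch (q^2) (q^2) n := by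
  induction n with
  | zero => simp [qpoch_zero]
  | succ k ih =>
    rw [show 2*(k+1) = 2*k+1+1 by ring, qpoch_succ, qpoch_succ, ih,
      qpoch_succ, qpoch_succ]
    ring

lemma relA (n : ℕ) : qpoch q⁻¹ (q^2) (n+1) = (1 - q⁻¹) * qpoch q (q^2) n := by
  induction n with
  | zero => simp [qpoch_zero, qpoch_succ]
  | succ k ih =>
    rw [qpoch_succ, ih, qpoch_succ]
    have : q⁻¹ * (q^2)^(k+1) = q * (q^2)^k := by
      rw [inv_mul_eq_div, div_eq_iff hq0]; ring
    rw [this]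
    ring

lemma qint_eq (n : ℕ) : qint n = (1 - q^n)/(1-q) := by
  rw [eq_div_iff h1q]
  unfold qint
  linear_combination -geom_sum_mul q n

lemma gen1 {F : Type*} [Field F] (x N E D O : F) (hx : x ≠ 0) (hE : E ≠ 0) (hD : D ≠ 0) :
    -(N/(x*D^8)) * (O*(E*D)/(E*E))^4 = O^4/(E^4*D^4) * (-(N/x)) := by
  have hB : x*D^8*(E*E)^4 ≠ 0 :=
    mul_ne_zero (mul_ne_zero hx (pow_ne_zero 8 hD)) (pow_ne_zero 4 (mul_ne_zero hE hE))
  have hB' : E^4*D^4*x ≠ 0 :=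
    mul_ne_zero (mul_ne_zero (pow_ne_zero 4 hE) (pow_ne_zero 4 hD)) hx
  rw [show -(N/(x*D^8)) * (O*(E*D)/(E*E))^4 = -(N*(O*(E*D))^4)/(x*D^8*(E*E)^4) from by ring,
    show O^4/(E^4*D^4) * (-(N/x)) = -(O^4*N)/(E^4*D^4*x) from by ring,
    div_eq_div_iff hB hB']
  ring

lemma gen2 {F : Type*} [Field F] (y w N c p E D O : F) (hy : y ≠ 0) (hc : c ≠ 0)
    (hE : E ≠ 0) (hD : D ≠ 0) :
    N/y * (w*O)^4 / (E*D*c)^4 * p = O^4/(E^4*D^4) * (N/y * w^4 * p / c^4) := by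
  have hB : y*(E*D*c)^4 ≠ 0 :=
    mul_ne_zero hy (pow_ne_zero 4 (mul_ne_zero (mul_ne_zero hE hD) hc))
  have hB' : E^4*D^4*(y*c^4) ≠ 0 :=
    mul_ne_zero (mul_ne_zero (pow_ne_zero 4 hE) (pow_ne_zero 4 hD))
      (mul_ne_zero hy (pow_ne_zero 4 hc))
  rw [show N/y * (w*O)^4 / (E*D*c)^4 * p = (N*(w*O)^4*p)/(y*(E*D*c)^4) from by ring,
    show O^4/(E^4*D^4) * (N/y * w^4 * p / c^4) = (O^4*(N*w^4*p))/(E^4*D^4*(y*c^4)) from by ring,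
    div_eq_div_iff hB hB']
  ring

lemma gen3 {F : Type*} [Field F] (x N a c g b E D O : F) (hx : x ≠ 0) (hc : c ≠ 0)
    (hg : g ≠ 0) (hb : b ≠ 0) (hE : E ≠ 0) (hD : D ≠ 0) (hcbg : c = b*g) :
    -(N/(x*(D*g)^8)) * (O*a*(E*D*c)/(E*b*(E*b)))^4
      = O^4/(E^4*D^4) * (-(N/x) * a^4 / c^4) := by
  have hB : x*(D*g)^8*(E*b*(E*b))^4 ≠ 0 :=
    mul_ne_zero (mul_ne_zero hx (pow_ne_zero 8 (mul_ne_zero hD hg)))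
      (pow_ne_zero 4 (mul_ne_zero (mul_ne_zero hE hb) (mul_ne_zero hE hb)))
  have hB' : E^4*D^4*(x*c^4) ≠ 0 :=
    mul_ne_zero (mul_ne_zero (pow_ne_zero 4 hE) (pow_ne_zero 4 hD))
      (mul_ne_zero hx (pow_ne_zero 4 hc))
  rw [show -(N/(x*(D*g)^8)) * (O*a*(E*D*c)/(E*b*(E*b)))^4
      = -(N*(O*a*(E*D*c))^4)/(x*(D*g)^8*(E*b*(E*b))^4) from by ring,
    show O^4/(E^4*D^4) * (-(N/x) * a^4 / c^4) = -(O^4*(N*a^4))/(E^4*D^4*(x*c^4)) from by ring,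
    div_eq_div_iff hB hB', hcbg]
  ring

set_option maxHeartbeats 4000000 in
lemma scalar_key {F : Type*} [Field F] (x u : F) (hx : x ≠ 0) (h1x : (1:F) - x ≠ 0)
    (h3 : (1:F) + x*u ≠ 0) (h4 : (1:F) - x*u ≠ 0) :
    -(((1+x) * ((1-u^2)/(1-x)) * ((1-x*u^2)/(1-x)) + u^2) / x)
      + ((1 - x^3*u^4)/(1-x)) * (1-x⁻¹)^4 * (x^4*u^4) / (1-x^2*u^2)^4
      = -(((1+x) * ((1-x^2*u^2)/(1-x)) * ((1-x^3*u^2)/(1-x)) + x^2*u^2) / x) *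
          (1-x*u^2)^4 / (1-x^2*u^2)^4 := by
  have h22 : (1:F) - x^2*u^2 = (1-x*u)*(1+x*u) := by ring
  rw [h22]
  have hB1 : (1-x)^2*x ≠ 0 := by
    exact mul_ne_zero (pow_ne_zero 2 h1x) hx
  have hc : ((1:F)-x*u)*(1+x*u) ≠ 0 := mul_ne_zero h4 h3
  have hB2 : (1-x)*((1-x*u)*(1+x*u))^4 ≠ 0 := mul_ne_zero h1x (pow_ne_zero 4 hc)
  have hB3 : (1-x)^2*x*((1-x*u)*(1+x*u))^4 ≠ 0 := mul_ne_zero hB1 (pow_ne_zero 4 hc)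
  have t1 : -(((1+x) * ((1-u^2)/(1-x)) * ((1-x*u^2)/(1-x)) + u^2) / x)
      = -((1+x)*(1-u^2)*(1-x*u^2) + u^2*(1-x)^2)/((1-x)^2*x) := by
    field_simp
  have t2 : ((1 - x^3*u^4)/(1-x)) * (1-x⁻¹)^4 * (x^4*u^4) / ((1-x*u)*(1+x*u))^4
      = ((1-x^3*u^4)*(x-1)^4*u^4)/((1-x)*((1-x*u)*(1+x*u))^4) := by
    field_simp
  have t3 : -(((1+x) * (((1-x*u)*(1+x*u))/(1-x)) * ((1-x^3*u^2)/(1-x)) + x^2*u^2) / x) *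
          (1-x*u^2)^4 / ((1-x*u)*(1+x*u))^4
      = -(((1+x)*((1-x*u)*(1+x*u))*(1-x^3*u^2) + x^2*u^2*(1-x)^2) * (1-x*u^2)^4) /
          ((1-x)^2*x*((1-x*u)*(1+x*u))^4) := by
    field_simp
  rw [t1, t2, t3, div_add_div _ _ hB1 hB2, div_eq_div_iff (mul_ne_zero hB1 hB2) hB3]
  ring

set_option maxHeartbeats 1000000 in
lemma step (k : ℕ) :
    -(((1 + q) * qint (2*k) * qint (2*k+1) + q ^ (2*k)) / (q * qpoch (-q) q k ^ 8)) *
        (qpoch q q (2*k) / (qpoch q q k * qpoch q q k)) ^ 4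
      + qintZ (4*(k:ℤ)+3) * qpoch q⁻¹ (q^2) (k+1) ^ 4 / qpoch (q^2) (q^2) (k+1) ^ 4 *
        q ^ (4*(k+1))
      = -(((1 + q) * qint (2*k+2) * qint (2*k+3) + q ^ (2*k+2)) /
            (q * qpoch (-q) q (k+1) ^ 8)) *
          (qpoch q q (2*k+2) / (qpoch q q (k+1) * qpoch q q (k+1))) ^ 4 := by
  have hz : (4*(k:ℤ)+3) = ((4*k+3 : ℕ) : ℤ) := by push_cast; ring
  rw [qintZ, hz, zpow_natCast]
  rw [relA, show 2*k+2 = 2*(k+1) by ring, relE2, relE2 (k+1),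
    qpoch_succ q (q^2), qpoch_succ (q^2) (q^2), qpoch_succ (-q) q, qpoch_succ q q]
  simp only [qint_eq]
  rw [relB]
  rw [show (1:RatFunc ℚ) - (-q)*q^k = 1 + q*q^k by ring]
  rw [show (q:RatFunc ℚ)^(2*k) = (q^k)^2 by rw [pow_mul']]
  rw [show (q:RatFunc ℚ)^(2*k+1) = q*(q^k)^2 by rw [pow_succ, pow_mul']; ring]
  rw [show (q:RatFunc ℚ)^(2*(k+1)) = q^2*(q^k)^2 by rw [pow_mul']; ring]
  rw [show (q:RatFunc ℚ)^(2*k+3) = q^3*(q^k)^2 by rw [pow_add, pow_mul']; ring]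
  rw [show (q:RatFunc ℚ)^(4*k+3) = q^3*(q^k)^4 by rw [pow_add, pow_mul']; ring]
  rw [show (q:RatFunc ℚ)^(4*(k+1)) = q^4*(q^k)^4 by rw [pow_mul', pow_succ]; ring]
  rw [show ((q:RatFunc ℚ)^2)^k = (q^k)^2 by rw [← pow_mul, pow_mul']]
  have hA2 : (1:RatFunc ℚ) - q^2*(q^k)^2 ≠ 0 := fun hc =>
    pow_sub_ne (2*k+2) (by omega) (by linear_combination hc)
  have hg : (1:RatFunc ℚ) + q*q^k ≠ 0 := fun hc =>
    pow_add_ne (k+1) (by linear_combination hc)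
  have hb : (1:RatFunc ℚ) - q*q^k ≠ 0 := fun hc =>
    pow_sub_ne (k+1) (by omega) (by linear_combination hc)
  rw [gen1 q ((1 + q) * ((1 - (q^k)^2)/(1-q)) * ((1 - q*(q^k)^2)/(1-q)) + (q^k)^2)
      (qpoch q q k) (qpoch (-q) q k) (qpoch q (q^2) k) hq0 (E_ne k) (D_ne k),
    gen2 (1-q) (1 - q⁻¹) (1 - q^3*(q^k)^4) (1 - q^2*(q^k)^2) (q^4*(q^k)^4)
      (qpoch q q k) (qpoch (-q) q k) (qpoch q (q^2) k) h1q hA2 (E_ne k) (D_ne k),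
    gen3 q ((1 + q) * ((1 - q^2*(q^k)^2)/(1-q)) * ((1 - q^3*(q^k)^2)/(1-q)) + q^2*(q^k)^2)
      (1 - q*(q^k)^2) (1 - q^2*(q^k)^2) (1 + q*q^k) (1 - q*q^k)
      (qpoch q q k) (qpoch (-q) q k) (qpoch q (q^2) k) hq0 hA2 hg hb (E_ne k) (D_ne k)
      (by ring),
    ← mul_add]
  exact congrArg (HMul.hMul (qpoch q (q^2) k ^ 4 / (qpoch q q k ^ 4 * qpoch (-q) q k ^ 4)))
    (scalar_key q (q^k) hq0 h1q hg hb)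

lemma main (k : ℕ) :
    ∑ n ∈ Finset.range (k+1),
        qintZ (4 * n - 1) * qpoch q⁻¹ (q ^ 2) n ^ 4 / qpoch (q ^ 2) (q ^ 2) n ^ 4 * q ^ (4 * n)
      = -(((1 + q) * qint (2 * (k+1) - 2) * qint (2 * (k+1) - 1) + q ^ (2 * (k+1) - 2)) /
          (q * qpoch (-q) q ((k+1) - 1) ^ 8)) * qbinom (2 * (k+1) - 2) ((k+1) - 1) ^ 4 := by
  induction k with
  | zero =>
    rw [Finset.sum_range_one]
    norm_num [qbinom, qpoch_zero, qintZ, qint]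
    rw [div_eq_iff h1q]
    field_simp
    rw [neg_div', neg_sub, sub_div, div_self hq0]
  | succ k ih =>
    rw [Finset.sum_range_succ, ih]
    have e1 : 2 * (k+1) - 2 = 2*k := by omega
    have e2 : 2 * (k+1) - 1 = 2*k+1 := by omega
    have e3 : (k+1) - 1 = k := by omega
    have e4 : 2 * (k+1+1) - 2 = 2*k+2 := by omega
    have e5 : 2 * (k+1+1) - 1 = 2*k+3 := by omega
    have e6 : (k+1+1) - 1 = k+1 := by omega
    rw [e1, e2, e3, e4, e5, e6]
    unfold qbinom
    rw [show 2*k - k = k by omega, show 2*k+2 - (k+1) = k+1 by omega]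
    have hz2 : (4 * ((k:ℤ)+1) - 1) = 4*(k:ℤ)+3 := by ring
    have := step k
    push_cast
    rw [hz2]
    convert this using 2

theorem sum_identity_full (m : ℕ) (hm : Odd m) (hm1 : 1 < m) :
    ∑ n ∈ Finset.range m,
        qintZ (4 * n - 1) * qpoch q⁻¹ (q ^ 2) n ^ 4 / qpoch (q ^ 2) (q ^ 2) n ^ 4 * q ^ (4 * n)
      = -(((1 + q) * qint (2 * m - 2) * qint (2 * m - 1) + q ^ (2 * m - 2)) /
          (q * qpoch (-q) q (m - 1) ^ 8)) * qbinom (2 * m - 2) (m - 1) ^ 4 := by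
  obtain ⟨k, rfl⟩ : ∃ k, m = k + 1 := ⟨m - 1, by omega⟩
  exact main k
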